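/- Let 0 < σ < 1, η_D > 1, α, γ, ε, μ > 0, and q(D) = (αμ + γD)(σ - η_D D)(1 - σ - (η_D - 1)D) - εD. Then q has exactly three real roots: one negative, one in (0, σ/η_D), and one greater than σ/η_D. In particular q has exactly one root in (0, σ/η_D). -/

import Mathlib

open Polynomial Filter Set

/-- q has exactly three real roots: one negative, one in (0, σ/η_D), and
one greater than σ/η_D; in particular exactly one root in (0, σ/η_D). -/
theorem stmt9 (α γ ε μ σ ηD : ℝ)
    (hσ0 : 0 < σ) (hσ1 : σ < 1) (hηD : 1 < ηD)
    (hα : 0 < α) (hγ : 0 < γ) (hε : 0 < ε) (hμ : 0 < μ) :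
    let q : ℝ → ℝ := fun D => (α * μ + γ * D) * (σ - ηD * D) * (1 - σ - (ηD - 1) * D) - ε * D
    (∃ d₁ d₂ d₃ : ℝ, d₁ < 0 ∧ d₂ ∈ Set.Ioo 0 (σ / ηD) ∧ σ / ηD < d₃ ∧
      (∀ D : ℝ, q D = 0 ↔ (D = d₁ ∨ D = d₂ ∨ D = d₃))) ∧
    (∃! D : ℝ, D ∈ Set.Ioo 0 (σ / ηD) ∧ q D = 0) := by
  intro q
  have hηD0 : (0:ℝ) < ηD := lt_trans one_pos hηD
  have hηD1 : (0:ℝ) < ηD - 1 := sub_pos.mpr hηD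
  have hσ1' : (0:ℝ) < 1 - σ := sub_pos.mpr hσ1
  set c3 : ℝ := γ * ηD * (ηD - 1) with hc3def
  set c2 : ℝ := α * μ * ηD * (ηD - 1) - γ * (σ * (ηD - 1) + ηD * (1 - σ)) with hc2def
  set c1 : ℝ := γ * σ * (1 - σ) - α * μ * (σ * (ηD - 1) + ηD * (1 - σ)) - ε with hc1def
  set c0 : ℝ := α * μ * σ * (1 - σ) with hc0def
  have hc3pos : 0 < c3 := by positivity
  have hc3 : c3 ≠ 0 := ne_of_gt hc3pos
  set P : Cubic ℝ := ⟨c3, c2, c1, c0⟩ with hPdef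
  have hPa : P.a ≠ 0 := hc3
  have hPeval : ∀ x : ℝ, Polynomial.eval x P.toPoly = q x := by
    intro x
    simp only [hPdef, Cubic.toPoly, q, hc3def, hc2def, hc1def, hc0def]
    simp [Polynomial.eval_add, Polynomial.eval_mul]
    ring
  have hqcont : Continuous q := by
    have : q = fun x => Polynomial.eval x P.toPoly := by
      funext x; rw [hPeval]
    rw [this]
    exact P.toPoly.continuous_aeval
  -- sign values
  have hq0 : 0 < q 0 := by
    have : q 0 = α * μ * σ * (1 - σ) := by simp only [q]; ring
    rw [this]; positivity
  have hs : 0 < σ / ηD := by positivity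
  have hqs : q (σ / ηD) < 0 := by
    have h1 : σ - ηD * (σ / ηD) = 0 := by field_simp; ring
    have : q (σ / ηD) = -(ε * (σ / ηD)) := by
      simp only [q]
      rw [mul_assoc, h1]
      ring
    rw [this]
    have : 0 < ε * (σ / ηD) := by positivity
    linarith
  -- a point far right where q is positive
  have hdeg : 0 < P.toPoly.degree := by
    rw [Cubic.degree_of_a_ne_zero hPa]; norm_num
  have htop : Tendsto (fun x => Polynomial.eval x P.toPoly) atTop atTop := by
    apply Polynomial.tendsto_atTop_of_leadingCoeff_nonneg _ hdeg
    rw [Cubic.leadingCoeff_of_a_ne_zero hPa]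
    exact le_of_lt hc3pos
  obtain ⟨b, hb⟩ : ∃ b : ℝ, σ / ηD < b ∧ 0 < q b := by
    have h1 : ∀ᶠ x in atTop, σ / ηD < x := eventually_gt_atTop _
    have h2 : ∀ᶠ x in atTop, 0 < Polynomial.eval x P.toPoly := htop.eventually_gt_atTop 0
    obtain ⟨x, hx1, hx2⟩ := (h1.and h2).exists
    exact ⟨x, hx1, by rwa [hPeval] at hx2⟩
  -- a point far left where q is negative
  set R : Cubic ℝ := ⟨-c3, c2, -c1, c0⟩ with hRdef
  have hRa : R.a ≠ 0 := by simpa [hRdef] using hc3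
  have hReval : ∀ x : ℝ, Polynomial.eval x R.toPoly = q (-x) := by
    intro x
    simp only [hRdef, Cubic.toPoly, q]
    simp [Polynomial.eval_add, Polynomial.eval_mul, hc3def, hc2def, hc1def, hc0def]
    ring
  have hRdeg : 0 < R.toPoly.degree := by
    rw [Cubic.degree_of_a_ne_zero hRa]; norm_num
  have hRtop : Tendsto (fun x => Polynomial.eval x R.toPoly) atTop atBot := by
    apply Polynomial.tendsto_atBot_of_leadingCoeff_nonpos _ hRdeg
    rw [Cubic.leadingCoeff_of_a_ne_zero hRa]
    simp only [hRdef]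
    linarith
  obtain ⟨a, ha⟩ : ∃ a : ℝ, a < 0 ∧ q a < 0 := by
    have h1 : ∀ᶠ x in atTop, (0:ℝ) < x := eventually_gt_atTop _
    have h2 : ∀ᶠ x in atTop, Polynomial.eval x R.toPoly < 0 := hRtop.eventually_lt_atBot 0
    obtain ⟨x, hx1, hx2⟩ := (h1.and h2).exists
    refine ⟨-x, by linarith, ?_⟩
    rw [hReval] at hx2
    exact hx2
  -- three roots via IVT
  obtain ⟨d₁, hd₁mem, hd₁⟩ : ∃ d₁ ∈ Ioo a 0, q d₁ = 0 := by
    have := intermediate_value_Ioo (le_of_lt ha.1) hqcont.continuousOn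
    have h0 : (0:ℝ) ∈ Ioo (q a) (q 0) := ⟨ha.2, hq0⟩
    obtain ⟨d, hd, hd0⟩ := this h0
    exact ⟨d, hd, hd0⟩
  obtain ⟨d₂, hd₂mem, hd₂⟩ : ∃ d₂ ∈ Ioo 0 (σ / ηD), q d₂ = 0 := by
    have := intermediate_value_Ioo' (le_of_lt hs) hqcont.continuousOn
    have h0 : (0:ℝ) ∈ Ioo (q (σ / ηD)) (q 0) := ⟨hqs, hq0⟩
    obtain ⟨d, hd, hd0⟩ := this h0
    exact ⟨d, hd, hd0⟩
  obtain ⟨d₃, hd₃mem, hd₃⟩ : ∃ d₃ ∈ Ioo (σ / ηD) b, q d₃ = 0 := by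
    have := intermediate_value_Ioo (le_of_lt hb.1) hqcont.continuousOn
    have h0 : (0:ℝ) ∈ Ioo (q (σ / ηD)) (q b) := ⟨hqs, hb.2⟩
    obtain ⟨d, hd, hd0⟩ := this h0
    exact ⟨d, hd, hd0⟩
  have hd₁0 : d₁ < 0 := hd₁mem.2
  have hd₂0 : 0 < d₂ := hd₂mem.1
  have hd₂s : d₂ < σ / ηD := hd₂mem.2
  have hd₃s : σ / ηD < d₃ := hd₃mem.1
  have h12 : d₁ ≠ d₂ := by intro h; rw [h] at hd₁0; linarith
  have h13 : d₁ ≠ d₃ := by intro h; rw [h] at hd₁0; linarith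
  have h23 : d₂ ≠ d₃ := by intro h; rw [h] at hd₂s; linarith
  -- all roots of P are exactly d₁, d₂, d₃
  have hP0 : P.toPoly ≠ 0 := Cubic.ne_zero_of_a_ne_zero hPa
  classical
  have hmemroots : ∀ d : ℝ, q d = 0 → d ∈ P.toPoly.roots.toFinset := by
    intro d hd
    rw [Multiset.mem_toFinset, Polynomial.mem_roots hP0]
    simpa [Polynomial.IsRoot, hPeval] using hd
  have hsub : ({d₁, d₂, d₃} : Finset ℝ) ⊆ P.toPoly.roots.toFinset := by
    intro x hx
    simp only [Finset.mem_insert, Finset.mem_singleton] at hx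
    rcases hx with rfl | rfl | rfl
    · exact hmemroots _ hd₁
    · exact hmemroots _ hd₂
    · exact hmemroots _ hd₃
  have hcard : ({d₁, d₂, d₃} : Finset ℝ).card = 3 := by
    rw [Finset.card_insert_of_notMem, Finset.card_insert_of_notMem, Finset.card_singleton]
    · simpa using h23
    · simp only [Finset.mem_insert, Finset.mem_singleton]
      push_neg
      exact ⟨h12, h13⟩
  have heq : P.toPoly.roots.toFinset = ({d₁, d₂, d₃} : Finset ℝ) :=
    (Finset.eq_of_subset_of_card_le hsub (by rw [hcard]; exact Cubic.card_roots_le)).symm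
  have hiff : ∀ D : ℝ, q D = 0 ↔ (D = d₁ ∨ D = d₂ ∨ D = d₃) := by
    intro D
    constructor
    · intro hD
      have := hmemroots D hD
      rw [heq] at this
      simpa using this
    · rintro (rfl | rfl | rfl) <;> assumption
  refine ⟨⟨d₁, d₂, d₃, hd₁0, hd₂mem, hd₃s, hiff⟩, ⟨d₂, ⟨hd₂mem, hd₂⟩, ?_⟩⟩
  rintro x ⟨⟨hx0, hxs⟩, hxq⟩
  rcases (hiff x).mp hxq with rfl | rfl | rfl
  · linarith
  · rfl
  · linarith
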